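/- Let x₁, …, xₙ be nonnegative reals with x_k ≤ X_{k−1} := max(1, Σ_{i=1}^{k−1} xᵢ) for every 1 ≤ k ≤ n. Then Σ_{k=1}^{n} x_k/√(X_{k−1}) ≤ (√2 + 1)·√(X_n), where X_n = max(1, Σ_{i=1}^{n} xᵢ). -/

import Mathlib

private lemma aux_9 (x : ℕ → ℝ) (hx0 : ∀ k, 0 ≤ x k) :
    ∀ n : ℕ, (∀ k < n, x k ≤ max 1 (∑ i ∈ Finset.range k, x i)) →
    ∑ k ∈ Finset.range n, x k / Real.sqrt (max 1 (∑ i ∈ Finset.range k, x i))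
      ≤ (Real.sqrt 2 + 1) * Real.sqrt (max 1 (∑ i ∈ Finset.range n, x i))
        + min (∑ i ∈ Finset.range n, x i) 1 - (Real.sqrt 2 + 1) := by
  have h2 : (Real.sqrt 2) ^ 2 = 2 := Real.sq_sqrt (by norm_num)
  have h2nn : (0:ℝ) ≤ Real.sqrt 2 := Real.sqrt_nonneg 2
  obtain ⟨c, hc⟩ : ∃ c : ℝ, c = Real.sqrt 2 + 1 := ⟨_, rfl⟩
  simp only [← hc]
  intro n
  induction n with
  | zero => intro _; simp
  | succ n ih =>
    intro hx
    have ihn := ih (fun k hk => hx k (Nat.lt_succ_of_lt hk))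
    have hSnn : 0 ≤ ∑ i ∈ Finset.range n, x i :=
      Finset.sum_nonneg fun i _ => hx0 i
    have hxn : x n ≤ max 1 (∑ i ∈ Finset.range n, x i) := hx n (Nat.lt_succ_self n)
    have hxnn : 0 ≤ x n := hx0 n
    rw [Finset.sum_range_succ, Finset.sum_range_succ]
    obtain ⟨S, hSdef⟩ : ∃ S : ℝ, S = ∑ i ∈ Finset.range n, x i := ⟨_, rfl⟩
    rw [← hSdef] at ihn hSnn hxn ⊢
    rcases le_or_gt 1 S with hS1 | hS1
    · -- Case A : 1 ≤ S
      have hmS : max 1 S = S := max_eq_right hS1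
      have hxS : x n ≤ S := by rwa [hmS] at hxn
      have hmS' : max 1 (S + x n) = S + x n := max_eq_right (by linarith)
      have hminS : min S 1 = 1 := min_eq_right hS1
      have hminS' : min (S + x n) 1 = 1 := min_eq_right (by linarith)
      rw [hmS, hminS] at ihn
      rw [hmS, hmS', hminS']
      have hanng : 0 ≤ Real.sqrt S := Real.sqrt_nonneg _
      have hbnng : 0 ≤ Real.sqrt (S + x n) := Real.sqrt_nonneg _
      have ha2 : (Real.sqrt S) ^ 2 = S := Real.sq_sqrt hSnn
      have hb2 : (Real.sqrt (S + x n)) ^ 2 = S + x n := Real.sq_sqrt (by linarith)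
      have ha1 : 1 ≤ Real.sqrt S := Real.one_le_sqrt.mpr hS1
      have hapos : 0 < Real.sqrt S := by linarith
      have hab : Real.sqrt S ≤ Real.sqrt (S + x n) := Real.sqrt_le_sqrt (by linarith)
      have hb2a : Real.sqrt (S + x n) ≤ Real.sqrt 2 * Real.sqrt S := by
        rw [← Real.sqrt_mul (by norm_num : (0:ℝ) ≤ 2)]
        exact Real.sqrt_le_sqrt (by linarith)
      have key : x n / Real.sqrt S ≤ c * Real.sqrt (S + x n) - c * Real.sqrt S := by
        rw [div_le_iff₀ hapos]
        nlinarith [mul_nonneg (sub_nonneg.mpr hab)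
          (sub_nonneg.mpr (by nlinarith : Real.sqrt S + Real.sqrt (S + x n) ≤ c * Real.sqrt S))]
      linarith
    · -- Case B : S < 1
      have hmS : max 1 S = 1 := max_eq_left hS1.le
      have hminS : min S 1 = S := min_eq_left hS1.le
      have hxn1 : x n ≤ 1 := by rwa [hmS] at hxn
      rw [hmS, hminS, Real.sqrt_one] at ihn
      rw [hmS, Real.sqrt_one, div_one]
      rcases le_or_gt (S + x n) 1 with hS'1 | hS'1
      · rw [max_eq_left hS'1, min_eq_left hS'1, Real.sqrt_one]
        linarith
      · rw [max_eq_right hS'1.le, min_eq_right hS'1.le]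
        have ht2 : (Real.sqrt (S + x n)) ^ 2 = S + x n := Real.sq_sqrt (by linarith)
        have ht1 : 1 ≤ Real.sqrt (S + x n) := Real.one_le_sqrt.mpr hS'1.le
        have htle : Real.sqrt (S + x n) ≤ Real.sqrt 2 := Real.sqrt_le_sqrt (by linarith)
        have key : S + x n ≤ c * Real.sqrt (S + x n) + 1 - c := by
          nlinarith [mul_nonneg (sub_nonneg.mpr ht1) (sub_nonneg.mpr htle)]
        linarith

/-- Series inequality (Jaksch–Ortner–Auer, Lemma 19): if each `x k` is at most
the clipped prefix sum before it, then `Σ x_k/√(X_{k-1}) ≤ (√2+1)√(X_n)`. -/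
theorem stmt_9 (n : ℕ) (x : ℕ → ℝ) (hx0 : ∀ k, 0 ≤ x k)
    (hx : ∀ k < n, x k ≤ max 1 (∑ i ∈ Finset.range k, x i)) :
    ∑ k ∈ Finset.range n, x k / Real.sqrt (max 1 (∑ i ∈ Finset.range k, x i))
      ≤ (Real.sqrt 2 + 1) * Real.sqrt (max 1 (∑ i ∈ Finset.range n, x i)) := by
  have h := aux_9 x hx0 n hx
  have hmin : min (∑ i ∈ Finset.range n, x i) 1 ≤ 1 := min_le_right _ _
  have h2 : (0:ℝ) ≤ Real.sqrt 2 := Real.sqrt_nonneg 2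
  linarith
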